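/- If x ≤ y, p ∈ ω(x), q ∈ ω(y), p ≪ q, and p is an equilibrium, then ω(x) ≪ ω(y), i.e., a ≪ b for every a ∈ ω(x) and b ∈ ω(y). -/

import Mathlib

lemma tendsto_of_dist_small' {M : Type*} [MetricSpace M] (u : ℕ → M) (b : M)
    (h : ∀ n : ℕ, dist (u n) b < 1 / (n + 1)) :
    Filter.Tendsto u Filter.atTop (nhds b) := by
  rw [tendsto_iff_dist_tendsto_zero]
  exact squeeze_zero (fun n => dist_nonneg) (fun n => (h n).le)
    tendsto_one_div_add_atTop_nhds_zero_nat

/-- Separation lemma (equilibrium case): if `x ≤ y`, `p ∈ ω(x)`, `q ∈ ω(y)`,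
`p ≪ q`, and `p` is an equilibrium, then `ω(x) ≪ ω(y)` pointwise. -/
theorem separation_lemma_equilibrium {M : Type*} [MetricSpace M] [CompleteSpace M]
    (φ : ℝ → M → M)
    (hcont : Continuous fun p : ℝ × M => φ p.1 p.2)
    (hφ0 : ∀ x, φ 0 x = x)
    (hφadd : ∀ s t : ℝ, 0 ≤ s → 0 ≤ t → ∀ x, φ (s + t) x = φ s (φ t x))
    (le lt : M → M → Prop)
    (hrefl : ∀ x, le x x) (hletrans : ∀ x y z, le x y → le y z → le x z)
    (hantisymm : ∀ x y, le x y → le y x → x = y)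
    (hsub : ∀ x y, lt x y → le x y)
    (hlttrans : ∀ x y z, lt x y → lt y z → lt x z)
    (hltle : ∀ x y z, lt x y → le y z → lt x z)
    (hlelt : ∀ x y z, le x y → lt y z → lt x z)
    (hltopen : ∀ x y, lt x y → ∃ U V : Set M, IsOpen U ∧ IsOpen V ∧ x ∈ U ∧ y ∈ V ∧
      ∀ u ∈ U, ∀ v ∈ V, lt u v)
    (hmono : ∀ x y, le x y → x ≠ y → ∀ t : ℝ, 0 < t → lt (φ t x) (φ t y))
    (hqc : ∀ (xs ys : ℕ → M) (a b : M), Filter.Tendsto xs Filter.atTop (nhds a) →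
      Filter.Tendsto ys Filter.atTop (nhds b) → (∀ n, lt (xs n) (ys n)) → le a b)
    (x y : M) (hxy : le x y)
    (horbx : IsCompact (closure {w : M | ∃ t : ℝ, 0 ≤ t ∧ w = φ t x}))
    (horby : IsCompact (closure {w : M | ∃ t : ℝ, 0 ≤ t ∧ w = φ t y}))
    -- the omega-limit sets
    (ωx ωy : Set M)
    (hωx : ωx = ⋂ s ∈ {s : ℝ | 0 ≤ s}, closure {w : M | ∃ t : ℝ, s ≤ t ∧ w = φ t x})
    (hωy : ωy = ⋂ s ∈ {s : ℝ | 0 ≤ s}, closure {w : M | ∃ t : ℝ, s ≤ t ∧ w = φ t y})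
    (hωxcompact : IsCompact ωx) (hωycompact : IsCompact ωy)
    (hωxinv : ∀ t : ℝ, 0 ≤ t → φ t '' ωx = ωx)
    (hωyinv : ∀ t : ℝ, 0 ≤ t → φ t '' ωy = ωy)
    -- nonordering of omega-limit sets
    (hnonorder : ∀ z a b : M,
      a ∈ ⋂ s ∈ {s : ℝ | 0 ≤ s}, closure {w : M | ∃ t : ℝ, s ≤ t ∧ w = φ t z} →
      b ∈ ⋂ s ∈ {s : ℝ | 0 ≤ s}, closure {w : M | ∃ t : ℝ, s ≤ t ∧ w = φ t z} →
      le a b → a = b)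
    (p q : M) (hp : p ∈ ωx) (hq : q ∈ ωy) (hpq : lt p q)
    (hpeq : ∀ t : ℝ, 0 ≤ t → φ t p = p) :
    ∀ a ∈ ωx, ∀ b ∈ ωy, lt a b := by
  -- sequence extraction from omega-limit membership
  have hextract : ∀ (z c : M),
      c ∈ (⋂ s ∈ {s : ℝ | 0 ≤ s}, closure {w : M | ∃ t : ℝ, s ≤ t ∧ w = φ t z}) →
      ∀ T : ℝ, ∃ f : ℕ → ℝ, ∀ n : ℕ,
        (T ≤ f n ∧ 0 ≤ f n) ∧ dist (φ (f n) z) c < 1 / (n + 1) := by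
    intro z c hc T
    have h1 : ∀ n : ℕ, ∃ t : ℝ, (T ≤ t ∧ 0 ≤ t) ∧ dist (φ t z) c < 1 / (n + 1) := by
      intro n
      have hc' : c ∈ closure {w : M | ∃ t : ℝ, max T 0 ≤ t ∧ w = φ t z} :=
        Set.mem_iInter₂.1 hc (max T 0) (show max T 0 ∈ {s : ℝ | 0 ≤ s} from le_max_right T 0)
      obtain ⟨w, hw, hdist⟩ := Metric.mem_closure_iff.1 hc' (1 / (n + 1)) (by positivity)
      obtain ⟨t, ht, rfl⟩ := hw
      exact ⟨t, ⟨le_trans (le_max_left _ _) ht, le_trans (le_max_right _ _) ht⟩,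
        by rwa [dist_comm]⟩
    choose f hf using h1
    exact ⟨f, hf⟩
  have hmemx : ∀ c ∈ ωx, ∀ T : ℝ, ∃ f : ℕ → ℝ, ∀ n : ℕ,
      (T ≤ f n ∧ 0 ≤ f n) ∧ dist (φ (f n) x) c < 1 / (n + 1) :=
    fun c hc => hextract x c (hωx ▸ hc)
  have hmemy : ∀ c ∈ ωy, ∀ T : ℝ, ∃ f : ℕ → ℝ, ∀ n : ℕ,
      (T ≤ f n ∧ 0 ≤ f n) ∧ dist (φ (f n) y) c < 1 / (n + 1) :=
    fun c hc => hextract y c (hωy ▸ hc)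
  have hnonx : ∀ a b : M, a ∈ ωx → b ∈ ωx → le a b → a = b :=
    fun a b ha hb => hnonorder x a b (hωx ▸ ha) (hωx ▸ hb)
  have hnony : ∀ a b : M, a ∈ ωy → b ∈ ωy → le a b → a = b :=
    fun a b ha hb => hnonorder y a b (hωy ▸ ha) (hωy ▸ hb)
  -- Step 1: find t₀ with lt p (φ t₀ y), via openness of lt
  obtain ⟨U, V, hUo, hVo, hpU, hqV, hUV⟩ := hltopen p q hpq
  have hqcl : q ∈ closure {w : M | ∃ t : ℝ, (0:ℝ) ≤ t ∧ w = φ t y} :=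
    Set.mem_iInter₂.1 (hωy ▸ hq) 0 le_rfl
  obtain ⟨w, hwV, t₀, ht₀, rfl⟩ := (_root_.mem_closure_iff.1 hqcl) V hVo hqV
  -- Step 2 (Claim A): lt p (φ t y) for all t ≥ t₀
  have hA : ∀ t : ℝ, t₀ ≤ t → lt p (φ t y) := by
    intro t ht
    have hlt0 : lt p (φ t₀ y) := hUV p hpU _ hwV
    rcases eq_or_lt_of_le ht with rfl | hlt'
    · exact hlt0
    · have hts : φ t y = φ (t - t₀) (φ t₀ y) := by
        have h' := hφadd (t - t₀) t₀ (by linarith) ht₀ y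
        rw [show t - t₀ + t₀ = t by ring] at h'
        exact h'
      by_cases hpe : p = φ t₀ y
      · rw [hts, ← hpe, hpeq _ (by linarith)]
        rw [← hpe] at hlt0
        exact hlt0
      · have h2 := hmono p (φ t₀ y) (hsub _ _ hlt0) hpe (t - t₀) (by linarith)
        rw [hpeq _ (by linarith)] at h2
        rw [hts]
        exact h2
  -- Step 3 (Claim B): le p b for all b in ωy
  have hB : ∀ b ∈ ωy, le p b := by
    intro b hb
    obtain ⟨f, hf⟩ := hmemy b hb t₀
    exact hqc (fun _ => p) (fun n => φ (f n) y) p b tendsto_const_nhds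
      (tendsto_of_dist_small' _ _ (fun n => (hf n).2)) (fun n => hA _ (hf n).1.1)
  -- Step 4 (Claim B'): lt p b for all b in ωy
  have hB' : ∀ b ∈ ωy, lt p b := by
    by_cases hpy : p ∈ ωy
    · intro b hb
      have hpb : p = b := hnony p b hpy hb (hB b hb)
      have hpq' : p = q := hnony p q hpy hq (hB q hq)
      rw [← hpb]
      rw [← hpq'] at hpq
      exact hpq
    · intro b hb
      have hb1 : b ∈ φ 1 '' ωy := by rw [hωyinv 1 zero_le_one]; exact hb
      obtain ⟨b₁, hb₁, rfl⟩ := hb1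
      have hne : p ≠ b₁ := fun h => hpy (h ▸ hb₁)
      have h2 := hmono p b₁ (hB b₁ hb₁) hne 1 one_pos
      rwa [hpeq 1 zero_le_one] at h2
  -- Step 5: a uniform open neighborhood of p strictly below ωy
  obtain ⟨U0, hU0o, hpU0, hU0⟩ :
      ∃ U : Set M, IsOpen U ∧ p ∈ U ∧ ∀ z ∈ U, ∀ b ∈ ωy, lt z b := by
    choose Ub Vb hUo' hVo' hpU' hbV' hlt' using fun b : ωy => hltopen p b (hB' b b.2)
    obtain ⟨s, hs⟩ := hωycompact.elim_finite_subcover Vb hVo'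
      (fun b hb => Set.mem_iUnion.2 ⟨⟨b, hb⟩, hbV' ⟨b, hb⟩⟩)
    refine ⟨⋂ i ∈ s, Ub i, isOpen_biInter_finset (fun i _ => hUo' i),
      Set.mem_iInter₂.2 (fun i _ => hpU' i), ?_⟩
    intro z hz b hb
    obtain ⟨i, his, hbV⟩ := Set.mem_iUnion₂.1 (hs hb)
    exact hlt' i z (Set.mem_iInter₂.1 hz i his) b hbV
  -- Step 6: find t₁ with φ t₁ x ∈ U0
  have hpcl : p ∈ closure {w : M | ∃ t : ℝ, (0:ℝ) ≤ t ∧ w = φ t x} :=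
    Set.mem_iInter₂.1 (hωx ▸ hp) 0 le_rfl
  obtain ⟨w, hwU, t₁, ht₁, rfl⟩ := (_root_.mem_closure_iff.1 hpcl) U0 hU0o hpU0
  have hx₁ : ∀ b ∈ ωy, lt (φ t₁ x) b := fun b hb => hU0 _ hwU b hb
  -- Step 7: le a b for all a ∈ ωx, b ∈ ωy
  have hle : ∀ a ∈ ωx, ∀ b ∈ ωy, le a b := by
    by_cases hcase : φ t₁ x ∈ ωy
    · -- degenerate case: the orbit of x enters ωy; then ωx = ωy = {φ t₁ x}
      set e := φ t₁ x with he
      have hey : ∀ b ∈ ωy, e = b := fun b hb => hnony e b hcase hb (hsub _ _ (hx₁ b hb))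
      have heq : ∀ t : ℝ, 0 ≤ t → φ t e = e := by
        intro t ht
        have h2 : φ t e ∈ ωy := by
          rw [← hωyinv t ht]
          exact Set.mem_image_of_mem _ hcase
        exact (hey _ h2).symm
      have horb : ∀ t : ℝ, t₁ ≤ t → φ t x = e := by
        intro t ht
        have h' := hφadd (t - t₁) t₁ (by linarith) ht₁ x
        rw [show t - t₁ + t₁ = t by ring] at h'
        rw [h', ← he]
        exact heq _ (by linarith)
      have hωxe : ∀ a ∈ ωx, a = e := by
        intro a ha
        have hacl : a ∈ closure {w : M | ∃ t : ℝ, t₁ ≤ t ∧ w = φ t x} :=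
          Set.mem_iInter₂.1 (hωx ▸ ha) t₁ ht₁
        have hset : {w : M | ∃ t : ℝ, t₁ ≤ t ∧ w = φ t x} = {e} := by
          ext w
          simp only [Set.mem_setOf_eq, Set.mem_singleton_iff]
          constructor
          · rintro ⟨t, ht, rfl⟩; exact horb t ht
          · intro hw; exact ⟨t₁, le_rfl, hw.trans he⟩
        rw [hset, closure_singleton] at hacl
        exact hacl
      intro a ha b hb
      rw [hωxe a ha, ← hey b hb]
      exact hrefl e
    · intro a ha b hb
      obtain ⟨f, hf⟩ := hmemx a ha (t₁ + 1)
      have hlt : ∀ n : ℕ, lt (φ (f n) x) b := by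
        intro n
        have hτ : (0:ℝ) < f n - t₁ := by have := (hf n).1.1; linarith
        have hbim : b ∈ φ (f n - t₁) '' ωy := by rw [hωyinv _ hτ.le]; exact hb
        obtain ⟨b₁, hb₁, hb₁e⟩ := hbim
        have hne : φ t₁ x ≠ b₁ := fun h => hcase (h ▸ hb₁)
        have h3 := hmono (φ t₁ x) b₁ (hsub _ _ (hx₁ b₁ hb₁)) hne (f n - t₁) hτ
        rw [hb₁e] at h3
        have h4 : φ (f n) x = φ (f n - t₁) (φ t₁ x) := by
          have h' := hφadd (f n - t₁) t₁ hτ.le ht₁ x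
          rw [show f n - t₁ + t₁ = f n by ring] at h'
          exact h'
        rw [h4]
        exact h3
      exact hqc (fun n => φ (f n) x) (fun _ => b) a b
        (tendsto_of_dist_small' _ _ (fun n => (hf n).2)) tendsto_const_nhds hlt
  -- Step 8: strictify
  intro a ha b hb
  have haim : a ∈ φ 1 '' ωx := by rw [hωxinv 1 zero_le_one]; exact ha
  obtain ⟨a₁, ha₁, rfl⟩ := haim
  have hbim : b ∈ φ 1 '' ωy := by rw [hωyinv 1 zero_le_one]; exact hb
  obtain ⟨b₁, hb₁, rfl⟩ := hbim
  by_cases hab : a₁ = b₁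
  · subst hab
    have h1 : lt p a₁ := hB' a₁ hb₁
    have h2 : p = a₁ := hnonx p a₁ hp ha₁ (hsub _ _ h1)
    rw [← h2, hpeq 1 zero_le_one]
    rw [← h2] at h1
    exact h1
  · exact hmono a₁ b₁ (hle a₁ ha₁ b₁ hb₁) hab 1 one_pos
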